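/- Let p, q ≥ 2 be integers. The quadratic Q(y) = (p-1)(q-1)y² − (p+q-1)y + 1 has two positive real roots y₋ ≤ y₊ given by y_± = (p+q-1 ± √((p-q)² + 2(p+q) − 3))/(2(p-1)(q-1)). Moreover y₊ < 1 if and only if p ≥ 3, q ≥ 3, and (p,q) ≠ (3,3); and y₋ < 1 always holds. -/

import Mathlib

set_option maxHeartbeats 1000000 in
theorem double_star_quadratic_roots (p q : ℕ) (hp : 2 ≤ p) (hq : 2 ≤ q) :
    ∃ yminus yplus : ℝ,
      yminus = ((p : ℝ) + q - 1 - Real.sqrt (((p : ℝ) - q) ^ 2 + 2 * ((p : ℝ) + q) - 3)) /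
        (2 * ((p : ℝ) - 1) * ((q : ℝ) - 1)) ∧
      yplus = ((p : ℝ) + q - 1 + Real.sqrt (((p : ℝ) - q) ^ 2 + 2 * ((p : ℝ) + q) - 3)) /
        (2 * ((p : ℝ) - 1) * ((q : ℝ) - 1)) ∧
      0 < yminus ∧ yminus ≤ yplus ∧
      ((p : ℝ) - 1) * ((q : ℝ) - 1) * yminus ^ 2 - ((p : ℝ) + q - 1) * yminus + 1 = 0 ∧
      ((p : ℝ) - 1) * ((q : ℝ) - 1) * yplus ^ 2 - ((p : ℝ) + q - 1) * yplus + 1 = 0 ∧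
      (yplus < 1 ↔ (3 ≤ p ∧ 3 ≤ q ∧ ¬(p = 3 ∧ q = 3))) ∧
      yminus < 1 := by
  have hp' : (2:ℝ) ≤ (p:ℝ) := by exact_mod_cast hp
  have hq' : (2:ℝ) ≤ (q:ℝ) := by exact_mod_cast hq
  have hDnn : (0:ℝ) ≤ ((p : ℝ) - q) ^ 2 + 2 * ((p : ℝ) + q) - 3 := by
    nlinarith [sq_nonneg ((p:ℝ) - q)]
  set s : ℝ := Real.sqrt (((p : ℝ) - q) ^ 2 + 2 * ((p : ℝ) + q) - 3) with hs
  have hs2 : s ^ 2 = ((p : ℝ) - q) ^ 2 + 2 * ((p : ℝ) + q) - 3 := Real.sq_sqrt hDnn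
  have hsnn : (0:ℝ) ≤ s := Real.sqrt_nonneg _
  have hspos : (0:ℝ) < s := Real.sqrt_pos.mpr (by nlinarith [sq_nonneg ((p:ℝ) - q)])
  have hp0 : ((p:ℝ) - 1) ≠ 0 := by linarith
  have hq0 : ((q:ℝ) - 1) ≠ 0 := by linarith
  have hc : (0:ℝ) < ((p:ℝ) - 1) * ((q:ℝ) - 1) := by nlinarith
  have hden : (0:ℝ) < 2 * ((p:ℝ) - 1) * ((q:ℝ) - 1) := by nlinarith
  have hsb : s < (p:ℝ) + q - 1 := by nlinarith
  refine ⟨_, _, rfl, rfl, ?_, ?_, ?_, ?_, ?_, ?_⟩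
  · exact div_pos (by linarith) hden
  · gcongr
    linarith
  · field_simp
    linear_combination hs2
  · field_simp
    linear_combination hs2
  · rw [div_lt_one hden]
    constructor
    · intro h
      -- from b + s < 2c and s > 0 derive A := 2c - b > 0, and s^2 < A^2 gives Q(1) > 0
      have hA : (0:ℝ) < 2 * (((p:ℝ) - 1) * ((q:ℝ) - 1)) - ((p:ℝ) + q - 1) := by nlinarith
      have hsA : s < 2 * (((p:ℝ) - 1) * ((q:ℝ) - 1)) - ((p:ℝ) + q - 1) := by linarith
      have hs2lt : s^2 < (2 * (((p:ℝ) - 1) * ((q:ℝ) - 1)) - ((p:ℝ) + q - 1))^2 := by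
        nlinarith [mul_self_lt_mul_self hsnn hsA]
      have hQ1 : (0:ℝ) < ((p:ℝ) - 2) * ((q:ℝ) - 2) - 1 := by nlinarith [hs2, hc]
      have hp3 : 3 ≤ p := by
        by_contra hcon
        have : p = 2 := by omega
        subst this
        norm_num at hQ1
      have hq3 : 3 ≤ q := by
        by_contra hcon
        have : q = 2 := by omega
        subst this
        norm_num at hQ1
      refine ⟨hp3, hq3, ?_⟩
      rintro ⟨rfl, rfl⟩
      norm_num at hQ1
    · rintro ⟨hp3, hq3, hne⟩
      have hp3' : (3:ℝ) ≤ (p:ℝ) := by exact_mod_cast hp3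
      have hq3' : (3:ℝ) ≤ (q:ℝ) := by exact_mod_cast hq3
      have hkey : (2:ℕ) ≤ (p - 2) * (q - 2) := by
        have h1 : 1 ≤ p - 2 := by omega
        have h2 : 1 ≤ q - 2 := by omega
        rcases Nat.lt_or_ge p 4 with h4 | h4
        · have hp3e : p = 3 := by omega
          have hq4 : 4 ≤ q := by omega
          have : 2 ≤ q - 2 := by omega
          calc (2:ℕ) ≤ q - 2 := this
            _ = 1 * (q - 2) := (one_mul _).symm
            _ ≤ (p - 2) * (q - 2) := Nat.mul_le_mul h1 le_rfl
        · calc (2:ℕ) = 2 * 1 := by norm_num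
            _ ≤ (p - 2) * (q - 2) := Nat.mul_le_mul (by omega) h2
      have hQ1 : (2:ℝ) ≤ ((p:ℝ) - 2) * ((q:ℝ) - 2) := by
        have hcast : (((p - 2) * (q - 2) : ℕ) : ℝ) = ((p:ℝ) - 2) * ((q:ℝ) - 2) := by
          push_cast [Nat.cast_sub (by omega : 2 ≤ p), Nat.cast_sub (by omega : 2 ≤ q)]
          ring
        calc (2:ℝ) ≤ (((p - 2) * (q - 2) : ℕ) : ℝ) := by exact_mod_cast hkey
          _ = _ := hcast
      have hA : (0:ℝ) < 2 * (((p:ℝ) - 1) * ((q:ℝ) - 1)) - ((p:ℝ) + q - 1) := by nlinarith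
      have hQpos : (0:ℝ) < ((p:ℝ) - 2) * ((q:ℝ) - 2) - 1 := by linarith
      have hprod := mul_pos hc hQpos
      have hs2lt : s^2 < (2 * (((p:ℝ) - 1) * ((q:ℝ) - 1)) - ((p:ℝ) + q - 1))^2 := by
        nlinarith [hs2, hprod]
      have := lt_of_pow_lt_pow_left₀ 2 hA.le hs2lt
      linarith
  · rw [div_lt_one hden]
    rcases le_or_gt ((p:ℝ) + q - 1) (2 * (((p:ℝ) - 1) * ((q:ℝ) - 1))) with hb | hb
    · linarith
    · -- b > 2c forces Q(1) < 0, hence D > (b - 2c)^2, so s > b - 2c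
      have hQneg : ((p:ℝ) - 1) * ((q:ℝ) - 1) - ((p:ℝ) + q - 1) + 1 < 0 := by nlinarith
      have hprod := mul_pos hc (neg_pos.mpr hQneg)
      have hgt : (((p:ℝ) + q - 1) - 2 * (((p:ℝ) - 1) * ((q:ℝ) - 1)))^2 < s^2 := by
        nlinarith [hs2, hprod]
      have := lt_of_pow_lt_pow_left₀ 2 hsnn hgt
      linarith
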